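/- Suppose n ≥ l+1, and let f and g be surjections from {1,…,n} onto {1,…,l+1} whose fiber partitions of {1,…,n} are different. Then W_{n,l}^{𝔖_f} ≠ W_{n,l}^{𝔖_g}. Consequently, the number of distinct subspaces of W_{n,l} of the form W_{n,l}^{𝔖_f}, as f ranges over all surjections from {1,…,n} onto {1,…,l+1}, equals S(n, l+1), the number of partitions of {1,…,n} into l+1 nonempty blocks. -/

import Mathlib

noncomputable section

open ExteriorAlgebra

/-- The sum-of-coordinates linear functional on `ℂ^n`. -/
def sumLin (n : ℕ) : (Fin n → ℂ) →ₗ[ℂ] ℂ where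
  toFun x := ∑ i, x i
  map_add' x y := by simp [Finset.sum_add_distrib]
  map_smul' c x := by simp [Finset.mul_sum]

/-- The standard representation `V_n = {x : ℂ^n | x_1 + ⋯ + x_n = 0}`. -/
def stdRep (n : ℕ) : Submodule ℂ (Fin n → ℂ) := LinearMap.ker (sumLin n)

/-- The exterior algebra of `ℂ^n`; the ambient home of `⋀^l ℂ^n`. -/
abbrev EA (n : ℕ) := ExteriorAlgebra ℂ (Fin n → ℂ)

/-- `W_{n,l} = ⋀^l V_n`, realized inside `⋀^l ℂ^n ⊆ ExteriorAlgebra ℂ ℂ^n`. -/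
def Wsub (n l : ℕ) : Submodule ℂ (EA n) :=
  (⋀[ℂ]^l ↥(stdRep n)).map (ExteriorAlgebra.map (stdRep n).subtype).toLinearMap

/-- The action of a permutation `σ ∈ 𝔖_n` on `⋀ ℂ^n`, induced by `(σ • x) i = x (σ⁻¹ i)`
(so that `σ • e_j = e_{σ j}`). -/
def permMap (n : ℕ) (σ : Equiv.Perm (Fin n)) : EA n →ₗ[ℂ] EA n :=
  (ExteriorAlgebra.map (LinearMap.funLeft ℂ ℂ ⇑σ⁻¹)).toLinearMap

/-- The standard basis vector `e_i` of `ℂ^n`. -/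
def evec (n : ℕ) (i : Fin n) : Fin n → ℂ := Pi.single i 1

/-- For an `(l+1)`-subset `α = {a_0 < a_1 < ⋯ < a_l}` of `{1,…,n}`,
the family of vectors `e_{a_i} − e_{a_0}`, `i = 1, …, l`. -/
def uvecs (n l : ℕ) (α : Finset (Fin n)) (hα : α.card = l + 1) : Fin l → (Fin n → ℂ) :=
  fun i => evec n ↑(α.orderIsoOfFin hα i.succ) - evec n ↑(α.orderIsoOfFin hα 0)

/-- The vector `w_α = (e_{a_1} − e_{a_0}) ∧ ⋯ ∧ (e_{a_l} − e_{a_0})`. -/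
def wvec (n l : ℕ) (α : Finset (Fin n)) (hα : α.card = l + 1) : EA n :=
  ιMulti ℂ l (uvecs n l α hα)

/-- The standard Hermitian inner product on `ℂ^n` against a fixed vector `u`
(linear in the first slot). -/
def stdInner (n : ℕ) (u : Fin n → ℂ) : (Fin n → ℂ) →ₗ[ℂ] ℂ where
  toFun x := ∑ k, x k * (starRingEnd ℂ) (u k)
  map_add' x y := by simp [add_mul, Finset.sum_add_distrib]
  map_smul' c x := by simp [Finset.mul_sum, mul_assoc]

/-- The linear map `x ↦ (⟨x, u_1⟩, …, ⟨x, u_l⟩)`. -/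
def rowsMap (n l : ℕ) (u : Fin l → (Fin n → ℂ)) : (Fin n → ℂ) →ₗ[ℂ] (Fin l → ℂ) :=
  LinearMap.pi fun j => stdInner n (u j)

/-- The alternating map `(v_1, …, v_l) ↦ det (⟨v_i, u_j⟩)_{ij}`. -/
def detPair (n l : ℕ) (u : Fin l → (Fin n → ℂ)) : (Fin n → ℂ) [⋀^Fin l]→ₗ[ℂ] ℂ :=
  (Matrix.detRowAlternating : (Fin l → ℂ) [⋀^Fin l]→ₗ[ℂ] ℂ).compLinearMap (rowsMap n l u)

/-- The linear functional `v ↦ ⟨v, u_1 ∧ ⋯ ∧ u_l⟩` on the exterior algebra: the Hermitian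
inner product on `⋀^l ℂ^n` induced by the standard inner product, paired against a
fixed pure wedge, extended by zero in other degrees. -/
def pairFun (n l : ℕ) (u : Fin l → (Fin n → ℂ)) : EA n →ₗ[ℂ] ℂ :=
  liftAlternating (fun i => if h : l = i then h ▸ detPair n l u else 0)

/-- The hyperplane `H_α = {v ∈ W_{n,l} : ⟨v, w_α⟩ = 0}`. -/
def Hplane (n l : ℕ) (α : Finset (Fin n)) (hα : α.card = l + 1) : Submodule ℂ (EA n) :=
  Wsub n l ⊓ LinearMap.ker (pairFun n l (uvecs n l α hα))
/-- The linear map `ℂ^n → ℂ^m` sending `e_i` to `e_{f i}`. -/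
def pushLin (n m : ℕ) (f : Fin n → Fin m) : (Fin n → ℂ) →ₗ[ℂ] (Fin m → ℂ) where
  toFun x := fun j => ∑ i ∈ Finset.univ.filter (fun i => f i = j), x i
  map_add' x y := by funext j; simp [Finset.sum_add_distrib]
  map_smul' c x := by funext j; simp [Finset.mul_sum]

/-- The induced map `f_* : ⋀ ℂ^n → ⋀ ℂ^m` (the exterior power of `e_i ↦ e_{f i}`). -/
def fstar (n m : ℕ) (f : Fin n → Fin m) : EA n →ₗ[ℂ] EA m :=
  (ExteriorAlgebra.map (pushLin n m f)).toLinearMap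

/-- The Young subgroup `𝔖_f ≤ 𝔖_n` of permutations preserving every fiber of `f`. -/
def youngSubgroup (n m : ℕ) (f : Fin n → Fin m) : Subgroup (Equiv.Perm (Fin n)) where
  carrier := {σ | ∀ i, f (σ i) = f i}
  one_mem' := fun _ => rfl
  mul_mem' := by
    intro a b ha hb i
    have h : (a * b) i = a (b i) := rfl
    rw [h, ha (b i), hb i]
  inv_mem' := by
    intro a ha i
    have h := ha (a⁻¹ i)
    rw [show a (a⁻¹ i) = i from by simp] at h
    exact h.symm

/-- The special flat `F_f`: the intersection (inside `W_{n,l}`) of the hyperplanes `H_α`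
over all `(l+1)`-subsets `α` with `|f(α)| ≤ l`. -/
def specialFlat (n m l : ℕ) (f : Fin n → Fin m) : Submodule ℂ (EA n) :=
  Wsub n l ⊓ ⨅ (α : Finset (Fin n)) (hα : α.card = l + 1) (_ : (α.image f).card ≤ l),
    Hplane n l α hα

/-- The fixed subspace `W_{n,l}^{𝔖_f} = {v ∈ W_{n,l} : σ·v = v for all σ ∈ 𝔖_f}`. -/
def fixedW (n m l : ℕ) (f : Fin n → Fin m) : Submodule ℂ (EA n) :=
  Wsub n l ⊓ ⨅ (σ : Equiv.Perm (Fin n)) (_ : σ ∈ youngSubgroup n m f),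
    LinearMap.ker (permMap n σ - LinearMap.id)

/-- The sections of `f : {1,…,n} → {1,…,m}`: maps `g` with `f ∘ g = id`. -/
abbrev sections (n m : ℕ) (f : Fin n → Fin m) := {g : Fin m → Fin n // f ∘ g = id}

/-- The averaging map `φ_f = (1/n_f) Σ_g g_*`, over all sections `g` of `f`. -/
def phiMap (n m : ℕ) (f : Fin n → Fin m) : EA m →ₗ[ℂ] EA n :=
  letI : Fintype (sections n m f) := Fintype.ofFinite _
  (Nat.card (sections n m f) : ℂ)⁻¹ •
    ∑ g : sections n m f, (ExteriorAlgebra.map (pushLin m n g.1)).toLinearMap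

/-- A flat of the intrinsic arrangement `A_n`: an intersection of a set of hyperplanes `H_α`
(inside the ambient space `W_{n,l}` of the arrangement). -/
def IsFlat (n l : ℕ) (U : Submodule ℂ (EA n)) : Prop :=
  ∃ S : Set {α : Finset (Fin n) // α.card = l + 1},
    U = Wsub n l ⊓ ⨅ a ∈ S, Hplane n l a.1 a.2

/-- The set of lines (one-dimensional flats) of the arrangement `A_n`. -/
def lines (n l : ℕ) : Set (Submodule ℂ (EA n)) :=
  {U | IsFlat n l U ∧ Module.finrank ℂ ↥U = 1}

/-- A flat is stable if it is contained in a special flat `F_f` for some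
surjection `f : {1,…,n} → {1,…,m}` with `m < n`. -/
def IsStable (n l : ℕ) (U : Submodule ℂ (EA n)) : Prop :=
  ∃ (m : ℕ) (f : Fin n → Fin m), Function.Surjective f ∧ m < n ∧ U ≤ specialFlat n m l f

/-- The Stirling number of the second kind `S(n,k)`: the number of partitions of
`{1,…,n}` into `k` nonempty blocks. -/
def stirling (n k : ℕ) : ℕ :=
  Nat.card {P : Finpartition (Finset.univ : Finset (Fin n)) // P.parts.card = k}

section Helpers

def fibc (n m : ℕ) (f : Fin n → Fin m) (t : Fin m) : ℕ :=
  (Finset.univ.filter (fun x => f x = t)).card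

lemma fibc_pos {n m : ℕ} {f : Fin n → Fin m} (hf : Function.Surjective f) (t : Fin m) :
    0 < fibc n m f t := by
  obtain ⟨x, hx⟩ := hf t
  exact Finset.card_pos.2 ⟨x, by simp [hx]⟩

lemma sum_ind {n m : ℕ} (f : Fin n → Fin m) (t : Fin m) :
    ∑ x, (if f x = t then (1:ℂ) else 0) = (fibc n m f t : ℂ) := by
  rw [Finset.sum_ite, Finset.sum_const_zero, add_zero, Finset.sum_const]
  simp [fibc]

def ufam (n l : ℕ) (f : Fin n → Fin (l+1)) (r : Fin (l+1)) : Fin l → (Fin n → ℂ) :=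
  fun j x => (fibc n (l+1) f r : ℂ) * (if f x = r.succAbove j then 1 else 0)
    - (fibc n (l+1) f (r.succAbove j) : ℂ) * (if f x = r then 1 else 0)

lemma ufam_mem {n l : ℕ} (f : Fin n → Fin (l+1)) (r : Fin (l+1)) (j : Fin l) :
    ufam n l f r j ∈ stdRep n := by
  simp only [stdRep, LinearMap.mem_ker, sumLin, LinearMap.coe_mk, AddHom.coe_mk, ufam]
  rw [Finset.sum_sub_distrib]
  rw [← Finset.mul_sum, ← Finset.mul_sum, sum_ind, sum_ind]
  ring

lemma ufam_apply_of {n l : ℕ} (f : Fin n → Fin (l+1)) (r : Fin (l+1)) (j q : Fin l)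
    (x : Fin n) (hx : f x = r.succAbove q) :
    ufam n l f r j x = if j = q then (fibc n (l+1) f r : ℂ) else 0 := by
  have h1 : f x ≠ r := by rw [hx]; exact Fin.succAbove_ne r q
  simp only [ufam, hx, if_neg h1, mul_zero, sub_zero]
  by_cases h : j = q
  · subst h; simp
  · rw [if_neg (fun e => h (Fin.succAbove_right_injective e.symm)), if_neg h, mul_zero]
    rw [if_neg (Fin.succAbove_ne r q)]
    ring

lemma ufam_apply_base {n l : ℕ} (f : Fin n → Fin (l+1)) (r : Fin (l+1)) (j : Fin l)
    (x : Fin n) (hx : f x = r) :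
    ufam n l f r j x = -(fibc n (l+1) f (r.succAbove j) : ℂ) := by
  have h1 : f x ≠ r.succAbove j := by rw [hx]; exact (Fin.succAbove_ne r j).symm
  simp only [ufam, hx, if_neg h1]
  rw [if_neg (Fin.succAbove_ne r j).symm]
  simp

def wfvec (n l : ℕ) (f : Fin n → Fin (l+1)) (r : Fin (l+1)) : EA n :=
  ιMulti ℂ l (ufam n l f r)

set_option synthInstance.maxHeartbeats 1000000 in
set_option maxHeartbeats 1000000 in
lemma wfvec_mem_Wsub (n l : ℕ) (f : Fin n → Fin (l+1)) (r : Fin (l+1)) :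
    wfvec n l f r ∈ Wsub n l := by
  refine ⟨ιMulti ℂ l (fun j => ⟨ufam n l f r j, ufam_mem f r j⟩), ?_, ?_⟩
  · exact ExteriorAlgebra.ιMulti_range ℂ l ⟨_, rfl⟩
  · rw [AlgHom.toLinearMap_apply, ExteriorAlgebra.map_apply_ιMulti]
    rfl

lemma permMap_ιMulti (n l : ℕ) (σ : Equiv.Perm (Fin n)) (v : Fin l → (Fin n → ℂ)) :
    permMap n σ (ιMulti ℂ l v) = ιMulti ℂ l (fun j x => v j (σ⁻¹ x)) := by
  rw [permMap, AlgHom.toLinearMap_apply, ExteriorAlgebra.map_apply_ιMulti]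
  rfl

lemma permMap_wfvec (n l : ℕ) (f : Fin n → Fin (l+1)) (r : Fin (l+1))
    (σ : Equiv.Perm (Fin n)) (hσ : ∀ x, f (σ x) = f x) :
    permMap n σ (wfvec n l f r) = wfvec n l f r := by
  rw [wfvec, permMap_ιMulti]
  congr 1
  funext j x
  have : f (σ⁻¹ x) = f x := by
    conv_rhs => rw [← Equiv.apply_symm_apply σ x]
    exact (hσ (σ⁻¹ x)).symm
  simp only [ufam, this]

lemma pairFun_ιMulti (n l : ℕ) (u v : Fin l → (Fin n → ℂ)) :
    pairFun n l u (ιMulti ℂ l v)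
      = Matrix.det (Matrix.of fun i j => ∑ k, v i k * (starRingEnd ℂ) (u j k)) := by
  rw [pairFun, ExteriorAlgebra.liftAlternating_apply_ιMulti, dif_pos rfl]
  rfl

lemma stdInner_evec (n : ℕ) (p : Fin n) (x : Fin n → ℂ) :
    ∑ k, x k * (starRingEnd ℂ) (evec n p k) = x p := by
  simp [evec, Pi.single_apply, apply_ite (starRingEnd ℂ), mul_ite]

lemma det_diag_ite (l : ℕ) (c : ℂ) (e : Equiv.Perm (Fin l)) :
    Matrix.det (Matrix.of fun i j : Fin l => if i = e j then c else 0)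
      = (Equiv.Perm.sign e : ℤ) * c ^ l := by
  have : (Matrix.of fun i j : Fin l => if i = e j then c else 0)
      = (Matrix.diagonal fun _ => c).submatrix id e := by
    ext i j
    simp [Matrix.diagonal_apply]
  rw [this, Matrix.det_permute', Matrix.det_diagonal]
  simp

lemma cast_pos_ne_neg {a b : ℕ} (ha : 0 < a) (hb : 0 < b) : (a : ℂ) ≠ -(b : ℂ) := by
  intro h
  have : ((a + b : ℕ) : ℂ) = 0 := by push_cast; rw [h]; ring
  rw [Nat.cast_eq_zero] at this
  omega

lemma swap_wfvec_ne (n l : ℕ) (hl1 : 1 ≤ l) (f : Fin n → Fin (l+1))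
    (hf : Function.Surjective f) (i i' : Fin n) (hfi : f i ≠ f i') :
    ∃ r, permMap n (Equiv.swap i i') (wfvec n l f r) ≠ wfvec n l f r := by
  classical
  obtain ⟨b, hb, hbs', hbt'⟩ :
      ∃ b : Fin (l+1) → Fin n, (∀ j, f (b j) = j) ∧ b (f i) = i ∧ b (f i') = i' := by
    refine ⟨fun j => if j = f i then i else if j = f i' then i' else (hf j).choose, ?_, ?_, ?_⟩
    · intro j
      dsimp only
      by_cases h1 : j = f i
      · rw [if_pos h1, h1]
      · rw [if_neg h1]
        by_cases h2 : j = f i'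
        · rw [if_pos h2, h2]
        · rw [if_neg h2]; exact (hf j).choose_spec
    · dsimp only; rw [if_pos rfl]
    · dsimp only; rw [if_neg (Ne.symm hfi), if_pos rfl]
  set s := f i with hs
  set t := f i' with ht
  have hbs : b s = i := hbs'
  have hbt : b t = i' := hbt'
  set τ := Equiv.swap i i' with hτdef
  have hτi : τ⁻¹ = τ := by rw [hτdef]; exact Equiv.swap_inv i i'
  have hτb : ∀ j, j ≠ s → j ≠ t → τ (b j) = b j := by
    intro j h1 h2
    apply Equiv.swap_apply_of_ne_of_ne
    · intro e; exact h1 (by rw [← hb j, e, hs])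
    · intro e; exact h2 (by rw [← hb j, e, ht])
  -- generic value of L on wfvec
  have key : ∀ r : Fin (l+1),
      pairFun n l (fun k => evec n (b (r.succAbove k))) (wfvec n l f r)
        = (fibc n (l+1) f r : ℂ) ^ l := by
    intro r
    rw [wfvec, pairFun_ιMulti]
    have he : (Matrix.of fun i j => ∑ k, ufam n l f r i k *
        (starRingEnd ℂ) (evec n (b (r.succAbove j)) k))
        = Matrix.of fun i j : Fin l => if i = (1 : Equiv.Perm (Fin l)) j
            then (fibc n (l+1) f r : ℂ) else 0 := by
      ext a c
      simp only [Matrix.of_apply, stdInner_evec]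
      rw [ufam_apply_of f r a c _ (hb _)]
      simp
      exact if_congr Iff.rfl rfl rfl
    rw [he, det_diag_ite]
    simp
  -- the permuted value
  rcases eq_or_lt_of_le hl1 with hl | hl2
  · -- l = 1
    obtain rfl : l = 1 := hl.symm
    refine ⟨s, fun h => ?_⟩
    have hL := congrArg (pairFun n 1 (fun k => evec n (b (s.succAbove k)))) h
    rw [key s] at hL
    have hst : s.succAbove 0 = t := by
      have h2 : ∀ x y s : Fin 2, x ≠ s → y ≠ s → x = y := by decide
      exact h2 _ _ s (Fin.succAbove_ne s 0) (Ne.symm hfi)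
    have hv : permMap n τ (wfvec n 1 f s) = ιMulti ℂ 1 (fun j x => ufam n 1 f s j (τ x)) := by
      rw [wfvec, permMap_ιMulti, hτi]
    rw [hv, pairFun_ιMulti] at hL
    have he : (Matrix.of fun i j => ∑ k, ufam n 1 f s i (τ k) *
        (starRingEnd ℂ) (evec n (b (s.succAbove j)) k))
        = Matrix.of fun _ _ : Fin 1 => -(fibc n 2 f t : ℂ) := by
      ext a c
      simp only [Matrix.of_apply, stdInner_evec]
      have hj : (c : Fin 1) = 0 := Subsingleton.elim _ _
      rw [hj, hst, hbt]
      have hτr : τ i' = i := Equiv.swap_apply_right i i'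
      rw [hτr, ufam_apply_base f s a _ hs.symm]
      have ha : (a : Fin 1) = 0 := Subsingleton.elim _ _
      rw [ha, hst]
    rw [he] at hL
    rw [Matrix.det_fin_one] at hL
    simp only [Matrix.of_apply, pow_one] at hL
    exact cast_pos_ne_neg (fibc_pos hf s) (fibc_pos hf t) hL.symm
  · -- l ≥ 2
    have : ∃ r : Fin (l+1), r ≠ s ∧ r ≠ t := by
      have hcard : (({s, t} : Finset (Fin (l+1)))ᶜ).Nonempty := by
        rw [← Finset.card_pos, Finset.card_compl]
        have h1 : ({s, t} : Finset (Fin (l+1))).card ≤ 2 :=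
          (Finset.card_insert_le _ _).trans (by simp)
        have h2 : Fintype.card (Fin (l+1)) = l + 1 := Fintype.card_fin _
        omega
      obtain ⟨r, hr⟩ := hcard
      rw [Finset.mem_compl, Finset.mem_insert, Finset.mem_singleton] at hr
      push_neg at hr
      exact ⟨r, hr⟩
    obtain ⟨r, hrs, hrt⟩ := this
    obtain ⟨s'', hs''⟩ := Fin.exists_succAbove_eq (Ne.symm hrs)
    obtain ⟨t'', ht''⟩ := Fin.exists_succAbove_eq (Ne.symm hrt)
    have hst'' : s'' ≠ t'' := by
      intro e; exact hfi (by rw [← hs'', ← ht'', e])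
    refine ⟨r, fun h => ?_⟩
    have hL := congrArg (pairFun n l (fun k => evec n (b (r.succAbove k)))) h
    rw [key r] at hL
    have hv : permMap n τ (wfvec n l f r) = ιMulti ℂ l (fun j x => ufam n l f r j (τ x)) := by
      rw [wfvec, permMap_ιMulti, hτi]
    rw [hv, pairFun_ιMulti] at hL
    have he : (Matrix.of fun i j => ∑ k, ufam n l f r i (τ k) *
        (starRingEnd ℂ) (evec n (b (r.succAbove j)) k))
        = Matrix.of fun i j : Fin l => if i = (Equiv.swap s'' t'') j
            then (fibc n (l+1) f r : ℂ) else 0 := by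
      ext a c
      simp only [Matrix.of_apply, stdInner_evec]
      by_cases h1 : c = s''
      · subst h1
        rw [hs'', hbs]
        have hτl : τ i = i' := Equiv.swap_apply_left i i'
        rw [hτl, ufam_apply_of f r a t'' _ (by rw [ht'', ← ht]), Equiv.swap_apply_left]
      · by_cases h2 : c = t''
        · subst h2
          rw [ht'', hbt]
          have hτr : τ i' = i := Equiv.swap_apply_right i i'
          rw [hτr, ufam_apply_of f r a s'' _ (by rw [hs'', ← hs]), Equiv.swap_apply_right]
        · have hjs : r.succAbove c ≠ s := by
            rw [← hs'']; exact fun e => h1 (Fin.succAbove_right_injective e)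
          have hjt : r.succAbove c ≠ t := by
            rw [← ht'']; exact fun e => h2 (Fin.succAbove_right_injective e)
          rw [hτb _ hjs hjt, ufam_apply_of f r a c _ (hb _),
            Equiv.swap_apply_of_ne_of_ne h1 h2]
    rw [he, det_diag_ite] at hL
    rw [Equiv.Perm.sign_swap hst''] at hL
    simp only [Units.val_neg, Units.val_one, Int.reduceNeg, Int.cast_neg, Int.cast_one,
      neg_mul, one_mul] at hL
    have hc : (0:ℕ) < fibc n (l+1) f r := fibc_pos hf r
    have : ((fibc n (l+1) f r : ℂ) ^ l) = -((fibc n (l+1) f r : ℂ) ^ l) := hL.symm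
    have h2 : ((fibc n (l+1) f r ^ l : ℕ) : ℂ) = -((fibc n (l+1) f r ^ l : ℕ) : ℂ) := by
      push_cast; exact this
    exact cast_pos_ne_neg (pow_pos hc l) (pow_pos hc l) h2

lemma mem_youngSubgroup {n m : ℕ} {f : Fin n → Fin m} {σ : Equiv.Perm (Fin n)} :
    σ ∈ youngSubgroup n m f ↔ ∀ i, f (σ i) = f i := Iff.rfl

lemma wfvec_mem_fixedW (n l : ℕ) (f : Fin n → Fin (l+1)) (r : Fin (l+1)) :
    wfvec n l f r ∈ fixedW n (l+1) l f := by
  refine Submodule.mem_inf.2 ⟨wfvec_mem_Wsub n l f r, ?_⟩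
  rw [Submodule.mem_iInf]
  intro σ
  rw [Submodule.mem_iInf]
  intro hσ
  rw [LinearMap.mem_ker, LinearMap.sub_apply, LinearMap.id_apply, sub_eq_zero]
  exact permMap_wfvec n l f r σ (mem_youngSubgroup.1 hσ)

lemma fixedW_ne_of (n l : ℕ) (hl1 : 1 ≤ l) (f g : Fin n → Fin (l+1))
    (hf : Function.Surjective f) (i i' : Fin n)
    (hfi : f i ≠ f i') (hgi : g i = g i') :
    fixedW n (l+1) l f ≠ fixedW n (l+1) l g := by
  obtain ⟨r, hr⟩ := swap_wfvec_ne n l hl1 f hf i i' hfi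
  intro h
  have hmem := wfvec_mem_fixedW n l f r
  rw [h] at hmem
  have hτ : Equiv.swap i i' ∈ youngSubgroup n (l+1) g := by
    rw [mem_youngSubgroup]
    intro x
    rcases eq_or_ne x i with rfl | h1
    · rw [Equiv.swap_apply_left]; exact hgi.symm
    rcases eq_or_ne x i' with rfl | h2
    · rw [Equiv.swap_apply_right]; exact hgi
    · rw [Equiv.swap_apply_of_ne_of_ne h1 h2]
  have h2 := (Submodule.mem_inf.1 hmem).2
  rw [Submodule.mem_iInf] at h2
  have h3 := h2 (Equiv.swap i i')
  rw [Submodule.mem_iInf] at h3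
  have h4 := h3 hτ
  rw [LinearMap.mem_ker, LinearMap.sub_apply, LinearMap.id_apply, sub_eq_zero] at h4
  exact hr h4

/-- If two functions have the same fibers (as an equivalence), the fixed spaces agree. -/
lemma fixedW_congr (n l : ℕ) (f g : Fin n → Fin (l+1))
    (h : ∀ x y, f x = f y ↔ g x = g y) :
    fixedW n (l+1) l f = fixedW n (l+1) l g := by
  have : youngSubgroup n (l+1) f = youngSubgroup n (l+1) g := by
    ext σ
    rw [mem_youngSubgroup, mem_youngSubgroup]
    constructor
    · intro hσ x; exact (h (σ x) x).1 (hσ x)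
    · intro hσ x; exact (h (σ x) x).2 (hσ x)
  rw [fixedW, fixedW, this]

/-- From distinct fiber partitions extract a separating pair (in one order or the other). -/
lemma exists_pair_of_ranges_ne {n m : ℕ} (f g : Fin n → Fin m)
    (hf : Function.Surjective f) (hg : Function.Surjective g)
    (hne : (Set.range fun j => f ⁻¹' {j}) ≠ (Set.range fun j => g ⁻¹' {j})) :
    (∃ i i', f i ≠ f i' ∧ g i = g i') ∨ (∃ i i', g i ≠ g i' ∧ f i = f i') := by
  by_contra hcon
  push_neg at hcon
  obtain ⟨h1, h2⟩ := hcon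
  apply hne
  have hiff : ∀ x y, f x = f y ↔ g x = g y := by
    intro x y
    constructor
    · intro e
      by_contra hgg
      exact h2 x y hgg e
    · intro e
      by_contra hff
      exact h1 x y hff e
  ext S
  constructor
  · rintro ⟨j, rfl⟩
    obtain ⟨x, hx⟩ := hf j
    refine ⟨g x, ?_⟩
    ext y
    simp only [Set.mem_preimage, Set.mem_singleton_iff]
    rw [← hx]
    exact (hiff y x).symm
  · rintro ⟨j, rfl⟩
    obtain ⟨x, hx⟩ := hg j
    refine ⟨f x, ?_⟩
    ext y
    simp only [Set.mem_preimage, Set.mem_singleton_iff]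
    rw [← hx]
    exact hiff y x

open Finset in
def fiberPartition {n m : ℕ} (f : Fin n → Fin m) : Finpartition (univ : Finset (Fin n)) :=
  letI : DecidableRel (Setoid.ker f).r := fun x y => instDecidableEqFin m (f x) (f y)
  Finpartition.ofSetoid (Setoid.ker f)

lemma mem_part_fiberPartition {n m : ℕ} (f : Fin n → Fin m) (x y : Fin n) :
    y ∈ (fiberPartition f).part x ↔ f x = f y := by
  letI : DecidableRel (Setoid.ker f).r := fun x y => instDecidableEqFin m (f x) (f y)
  exact Finpartition.mem_part_ofSetoid_iff_rel

lemma part_fiberPartition_eq_iff {n m : ℕ} (f : Fin n → Fin m) (x y : Fin n) :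
    (fiberPartition f).part x = (fiberPartition f).part y ↔ f x = f y := by
  constructor
  · intro h
    have hy : y ∈ (fiberPartition f).part y := (fiberPartition f).mem_part (Finset.mem_univ y)
    rw [← h, mem_part_fiberPartition] at hy
    exact hy
  · intro h
    ext z
    rw [mem_part_fiberPartition, mem_part_fiberPartition, h]

lemma card_parts_fiberPartition {n m : ℕ} (f : Fin n → Fin m)
    (hf : Function.Surjective f) : (fiberPartition f).parts.card = m := by
  classical
  have hb : (fiberPartition f).parts.card = (Finset.univ : Finset (Fin m)).card := by
    apply Finset.card_bij
      (fun t ht => f ((fiberPartition f).nonempty_of_mem_parts ht).choose)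
      (fun t ht => Finset.mem_univ _)
    · intro t1 ht1 t2 ht2 he
      have hx1 := ((fiberPartition f).nonempty_of_mem_parts ht1).choose_spec
      have hx2 := ((fiberPartition f).nonempty_of_mem_parts ht2).choose_spec
      rw [← Finpartition.part_eq_of_mem _ ht1 hx1, ← Finpartition.part_eq_of_mem _ ht2 hx2]
      rw [part_fiberPartition_eq_iff]
      exact he
    · intro j _
      obtain ⟨x, hx⟩ := hf j
      have hmem : (fiberPartition f).part x ∈ (fiberPartition f).parts :=
        (fiberPartition f).part_mem.2 (Finset.mem_univ x)
      refine ⟨(fiberPartition f).part x, hmem, ?_⟩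
      have hc := ((fiberPartition f).nonempty_of_mem_parts hmem).choose_spec
      rw [mem_part_fiberPartition] at hc
      rw [← hc, hx]
  rw [hb, Finset.card_fin]

def partFun {n k : ℕ} (P : Finpartition (Finset.univ : Finset (Fin n)))
    (h : P.parts.card = k) : Fin n → Fin k :=
  fun x => (Fintype.equivFinOfCardEq (by rw [Fintype.card_coe, h]) :
    {t // t ∈ P.parts} ≃ Fin k) ⟨P.part x, P.part_mem.2 (Finset.mem_univ x)⟩

lemma partFun_eq_iff {n k : ℕ} (P : Finpartition (Finset.univ : Finset (Fin n)))
    (h : P.parts.card = k) (x y : Fin n) :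
    partFun P h x = partFun P h y ↔ P.part x = P.part y := by
  rw [partFun]
  constructor
  · intro e
    have := (Fintype.equivFinOfCardEq (show Fintype.card {t // t ∈ P.parts} = k by
      rw [Fintype.card_coe, h])).injective e
    exact congrArg Subtype.val this
  · intro e
    congr 1
    exact Subtype.ext e

lemma partFun_surjective {n k : ℕ} (P : Finpartition (Finset.univ : Finset (Fin n)))
    (h : P.parts.card = k) : Function.Surjective (partFun P h) := by
  intro j
  set e := (Fintype.equivFinOfCardEq (show Fintype.card {t // t ∈ P.parts} = k by
    rw [Fintype.card_coe, h]) : {t // t ∈ P.parts} ≃ Fin k)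
  obtain ⟨x, hx⟩ := P.nonempty_of_mem_parts (e.symm j).2
  refine ⟨x, ?_⟩
  have : P.part x = (e.symm j).1 := Finpartition.part_eq_of_mem _ (e.symm j).2 hx
  rw [partFun]
  have h2 : (⟨P.part x, P.part_mem.2 (Finset.mem_univ x)⟩ : {t // t ∈ P.parts}) = e.symm j :=
    Subtype.ext this
  rw [h2, Equiv.apply_symm_apply]

lemma partFun_kernel_eq {n m : ℕ} (f : Fin n → Fin m) (hf : Function.Surjective f)
    (x y : Fin n) :
    partFun (fiberPartition f) (card_parts_fiberPartition f hf) x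
      = partFun (fiberPartition f) (card_parts_fiberPartition f hf) y ↔ f x = f y := by
  rw [partFun_eq_iff, part_fiberPartition_eq_iff]

lemma finpartition_eq_of_parts_eq {n : ℕ}
    {P Q : Finpartition (Finset.univ : Finset (Fin n))}
    (h : ∀ x y : Fin n, (P.part x = P.part y) ↔ (Q.part x = Q.part y)) : P = Q := by
  have hpq : ∀ x, P.part x = Q.part x := by
    intro x
    ext y
    rw [P.mem_part_iff_part_eq_part (Finset.mem_univ y) (Finset.mem_univ x),
      Q.mem_part_iff_part_eq_part (Finset.mem_univ y) (Finset.mem_univ x)]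
    rw [h]
  ext t
  constructor
  · intro ht
    obtain ⟨x, hx⟩ := P.nonempty_of_mem_parts ht
    rw [← Finpartition.part_eq_of_mem _ ht hx, hpq]
    exact Q.part_mem.2 (Finset.mem_univ x)
  · intro ht
    obtain ⟨x, hx⟩ := Q.nonempty_of_mem_parts ht
    rw [← Finpartition.part_eq_of_mem _ ht hx, ← hpq]
    exact P.part_mem.2 (Finset.mem_univ x)

end Helpers

/-- Surjections `f, g : {1,…,n} ↠ {1,…,l+1}` with different fiber partitions give different
fixed subspaces `W_{n,l}^{𝔖_f}`; consequently the number of distinct subspaces of this form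
equals the Stirling number `S(n, l+1)`. -/
theorem statement_13 (n l : ℕ) (hl1 : 1 ≤ l) (hn : l + 1 ≤ n) :
    (∀ f g : Fin n → Fin (l + 1), Function.Surjective f → Function.Surjective g →
      (Set.range fun j => f ⁻¹' {j}) ≠ (Set.range fun j => g ⁻¹' {j}) →
      fixedW n (l + 1) l f ≠ fixedW n (l + 1) l g) ∧
    Set.ncard {U : Submodule ℂ (EA n) |
        ∃ f : Fin n → Fin (l + 1), Function.Surjective f ∧ U = fixedW n (l + 1) l f}
      = stirling n (l + 1) := by
  constructor
  · intro f g hf hg hne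
    rcases exists_pair_of_ranges_ne f g hf hg hne with ⟨i, i', hfi, hgi⟩ | ⟨i, i', hgi, hfi⟩
    · exact fixedW_ne_of n l hl1 f g hf i i' hfi hgi
    · exact (fixedW_ne_of n l hl1 g f hg i i' hgi hfi).symm
  · set Φ : {P : Finpartition (Finset.univ : Finset (Fin n)) // P.parts.card = l+1}
        → Submodule ℂ (EA n) :=
      fun P => fixedW n (l+1) l (partFun P.1 P.2) with hΦ
    have hinj : Function.Injective Φ := by
      intro P Q h
      have hker : ∀ x y, partFun P.1 P.2 x = partFun P.1 P.2 y
          ↔ partFun Q.1 Q.2 x = partFun Q.1 Q.2 y := by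
        intro x y
        constructor
        · intro e
          by_contra hne
          exact fixedW_ne_of n l hl1 (partFun Q.1 Q.2) (partFun P.1 P.2)
            (partFun_surjective Q.1 Q.2) x y hne e h.symm
        · intro e
          by_contra hne
          exact fixedW_ne_of n l hl1 (partFun P.1 P.2) (partFun Q.1 Q.2)
            (partFun_surjective P.1 P.2) x y hne e h
      apply Subtype.ext
      apply finpartition_eq_of_parts_eq
      intro x y
      rw [← partFun_eq_iff P.1 P.2 x y, ← partFun_eq_iff Q.1 Q.2 x y]
      exact hker x y
    have hset : {U : Submodule ℂ (EA n) |
        ∃ f : Fin n → Fin (l + 1), Function.Surjective f ∧ U = fixedW n (l + 1) l f}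
        = Set.range Φ := by
      ext U
      constructor
      · rintro ⟨f, hf, rfl⟩
        refine ⟨⟨fiberPartition f, card_parts_fiberPartition f hf⟩, ?_⟩
        exact fixedW_congr n l _ f (fun x y => partFun_kernel_eq f hf x y)
      · rintro ⟨P, rfl⟩
        exact ⟨partFun P.1 P.2, partFun_surjective P.1 P.2, rfl⟩
    rw [hset, stirling, ← Nat.card_coe_set_eq]
    exact Nat.card_range_of_injective hinj
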